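/- Fix reals t > 0, B > 0, 0 < a₁ < a₂, C₁, C₂, P₁, P₂ and β ≥ 0 such that (P₁ − β)·C₁ > 0 and β·(C₁ − C₂) − P₁·C₁ + P₂·C₂ > 0. Define d₂ = B·t·log₂((β·(C₁ − C₂) − P₁·C₁ + P₂·C₂)/((ln 2)·(a₂ − a₁))) and d₁ = B·t·log₂((a₂ − a₁)·(P₁·C₁ − β·C₁)/(a₁·(β·(C₁ − C₂) − P₁·C₁ + P₂·C₂))). Then (d₁, d₂) is a stationary point of the Lagrangian, i.e., (ln 2)·a₁·2^((d₁+d₂)/(B·t)) + (β − P₁)·C₁ = 0 and (ln 2)·a₁·2^((d₁+d₂)/(B·t)) + (ln 2)·(a₂ − a₁)·2^(d₂/(B·t)) + (β − P₂)·C₂ = 0. -/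

import Mathlib

/-- the closed-form offloading data
`d₂ = B·t·log₂((β(C₁−C₂) − P₁C₁ + P₂C₂)/(ln2·(a₂−a₁)))` and
`d₁ = B·t·log₂((a₂−a₁)(P₁C₁ − βC₁)/(a₁(β(C₁−C₂) − P₁C₁ + P₂C₂)))`
form a stationary point of the Lagrangian of the offloading-data subproblem. -/
theorem stmt_14 (t B a₁ a₂ C₁ C₂ P₁ P₂ β : ℝ)
    (ht : 0 < t) (hB : 0 < B) (ha₁ : 0 < a₁) (h12 : a₁ < a₂) (hβ : 0 ≤ β)
    (h1 : 0 < (P₁ - β) * C₁)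
    (h2 : 0 < β * (C₁ - C₂) - P₁ * C₁ + P₂ * C₂)
    (d₁ d₂ : ℝ)
    (hd₂ : d₂ = B * t * Real.logb 2
      ((β * (C₁ - C₂) - P₁ * C₁ + P₂ * C₂) / (Real.log 2 * (a₂ - a₁))))
    (hd₁ : d₁ = B * t * Real.logb 2
      ((a₂ - a₁) * (P₁ * C₁ - β * C₁)
        / (a₁ * (β * (C₁ - C₂) - P₁ * C₁ + P₂ * C₂)))) :
    Real.log 2 * a₁ * (2 : ℝ) ^ ((d₁ + d₂) / (B * t)) + (β - P₁) * C₁ = 0 ∧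
    Real.log 2 * a₁ * (2 : ℝ) ^ ((d₁ + d₂) / (B * t))
      + Real.log 2 * (a₂ - a₁) * (2 : ℝ) ^ (d₂ / (B * t))
      + (β - P₂) * C₂ = 0 := by
  have hBt : B * t ≠ 0 := by positivity
  have hln2 : 0 < Real.log 2 := Real.log_pos (by norm_num)
  have ha21 : 0 < a₂ - a₁ := by linarith
  have hX : 0 < β * (C₁ - C₂) - P₁ * C₁ + P₂ * C₂ := h2
  have hx2 : 0 < (β * (C₁ - C₂) - P₁ * C₁ + P₂ * C₂) / (Real.log 2 * (a₂ - a₁)) := by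
    positivity
  have hPC : 0 < P₁ * C₁ - β * C₁ := by nlinarith
  have hx1 : 0 < (a₂ - a₁) * (P₁ * C₁ - β * C₁)
      / (a₁ * (β * (C₁ - C₂) - P₁ * C₁ + P₂ * C₂)) := by positivity
  have e2 : (2 : ℝ) ^ (d₂ / (B * t))
      = (β * (C₁ - C₂) - P₁ * C₁ + P₂ * C₂) / (Real.log 2 * (a₂ - a₁)) := by
    rw [hd₂, mul_comm (B * t), mul_div_assoc, div_self hBt, mul_one,
      Real.rpow_logb (by norm_num) (by norm_num) hx2]
  have e1 : (2 : ℝ) ^ (d₁ / (B * t))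
      = (a₂ - a₁) * (P₁ * C₁ - β * C₁)
        / (a₁ * (β * (C₁ - C₂) - P₁ * C₁ + P₂ * C₂)) := by
    rw [hd₁, mul_comm (B * t), mul_div_assoc, div_self hBt, mul_one,
      Real.rpow_logb (by norm_num) (by norm_num) hx1]
  have e12 : (2 : ℝ) ^ ((d₁ + d₂) / (B * t)) = (P₁ * C₁ - β * C₁) / (a₁ * Real.log 2) := by
    rw [add_div, Real.rpow_add (by norm_num), e1, e2]
    rw [div_mul_div_comm, div_eq_div_iff (by positivity) (by positivity)]
    ring
  constructor
  · rw [e12]; field_simp; ring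
  · rw [e12, e2]; field_simp; ring
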